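/- Let ℋ be a complex Hilbert space, H ⊆ ℋ a closed real-linear subspace, and A : ℋ → ℋ a bounded selfadjoint complex-linear operator such that exp(isA)H = H for all s ∈ ℝ. Then for every continuous function g : ℝ → ℂ satisfying g(−t) = conj(g(t)) for all t ∈ ℝ, the operator g(A) defined by the continuous functional calculus of A maps H into H. -/

import Mathlib

open Polynomial NormedSpace

/-- Weierstrass approximation of an even continuous function by polynomials in `t ^ 2`. -/
lemma aux_even_approx (f : ℝ → ℝ) (hf : Continuous f) (heven : ∀ t, f (-t) = f t)
    (M ε : ℝ) (hε : 0 < ε) :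
    ∃ r : ℝ[X], ∀ t : ℝ, |t| ≤ M → |r.eval (t ^ 2) - f t| ≤ ε := by
  obtain ⟨r, hr⟩ := exists_polynomial_near_of_continuousOn 0 (M ^ 2)
    (fun u => f (Real.sqrt u)) ((hf.comp Real.continuous_sqrt).continuousOn) ε hε
  refine ⟨r, fun t ht => ?_⟩
  have h1 : t ^ 2 ∈ Set.Icc (0 : ℝ) (M ^ 2) := by
    refine ⟨sq_nonneg t, ?_⟩
    rw [← sq_abs]
    exact pow_le_pow_left₀ (abs_nonneg t) ht 2
  have h2 := hr _ h1
  rw [Real.sqrt_sq_eq_abs] at h2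
  have h3 : f |t| = f t := by
    rcases abs_choice t with h | h
    · rw [h]
    · rw [h, heven]
  rw [h3] at h2
  exact h2.le

/-- Approximation of an odd continuous function by `t * r (t ^ 2)` with `r` polynomial. -/
lemma aux_odd_approx (f : ℝ → ℝ) (hf : Continuous f) (hodd : ∀ t, f (-t) = - f t)
    (M ε : ℝ) (hM : 0 ≤ M) (hε : 0 < ε) :
    ∃ r : ℝ[X], ∀ t : ℝ, |t| ≤ M → |t * r.eval (t ^ 2) - f t| ≤ ε := by
  have hf0 : f 0 = 0 := by have := hodd 0; simp at this; linarith
  -- small values of f near 0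
  obtain ⟨δ', hδ'pos, hδ'⟩ := Metric.continuousAt_iff.mp (hf.continuousAt (x := 0))
    (ε / 4) (by linarith)
  set δ : ℝ := δ' / 2 with hδdef
  have hδpos : 0 < δ := by positivity
  have hsmall : ∀ t : ℝ, |t| ≤ δ → |f t| ≤ ε / 4 := by
    intro t htd
    have : dist t 0 < δ' := by
      rw [Real.dist_eq, sub_zero]
      linarith
    have := hδ' this
    rw [Real.dist_eq, hf0, sub_zero] at this
    exact this.le
  set m : ℝ → ℝ := fun t => max |t| δ with hmdef
  have hm_pos : ∀ t, 0 < m t := fun t => lt_of_lt_of_le hδpos (le_max_right _ _)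
  set k : ℝ → ℝ := fun t => f (m t) / m t with hkdef
  have hk_cont : Continuous k :=
    (hf.comp (continuous_abs.max continuous_const)).div
      (continuous_abs.max continuous_const) (fun t => (hm_pos t).ne')
  have hk_even : ∀ t, k (-t) = k t := by intro t; simp [hkdef, hmdef, abs_neg]
  have key : ∀ t : ℝ, |t * k t - f t| ≤ ε / 2 := by
    intro t
    rcases le_or_gt δ |t| with h | h
    · have hmt : m t = |t| := max_eq_left h
      have htne : t ≠ 0 := by
        intro h0
        rw [h0, abs_zero] at h
        linarith
      have : t * k t = f t := by
        rcases abs_choice t with ha | ha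
        · rw [hkdef]
          simp only []
          rw [hmt, ha]
          field_simp
        · rw [hkdef]
          simp only []
          rw [hmt, ha, hodd]
          field_simp
      rw [this, sub_self, abs_zero]
      positivity
    · have hmt : m t = δ := max_eq_right h.le
      have h1 : |t * k t| ≤ ε / 4 := by
        rw [abs_mul, hkdef]
        simp only []
        rw [hmt, abs_div]
        have hfδ : |f δ| ≤ ε / 4 := hsmall δ (by rw [abs_of_pos hδpos])
        have habsδ : |δ| = δ := abs_of_pos hδpos
        calc |t| * (|f δ| / |δ|) ≤ δ * (|f δ| / δ) := by
              rw [habsδ]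
              apply mul_le_mul h.le le_rfl (by positivity) hδpos.le
          _ = |f δ| := by field_simp
          _ ≤ ε / 4 := hfδ
      have h2 : |f t| ≤ ε / 4 := hsmall t h.le
      calc |t * k t - f t| ≤ |t * k t| + |f t| := abs_sub _ _
        _ ≤ ε / 4 + ε / 4 := add_le_add h1 h2
        _ = ε / 2 := by ring
  have hε1 : (0:ℝ) < ε / (2 * (M + 1)) := by positivity
  obtain ⟨r, hr⟩ := aux_even_approx k hk_cont hk_even M (ε / (2 * (M + 1))) hε1
  refine ⟨r, fun t ht => ?_⟩
  have h1 : |t * r.eval (t ^ 2) - t * k t| ≤ M * (ε / (2 * (M + 1))) := by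
    rw [← mul_sub, abs_mul]
    exact mul_le_mul ht (hr t ht) (abs_nonneg _) hM
  have h2 : M * (ε / (2 * (M + 1))) ≤ ε / 2 := by
    rw [← mul_div_assoc, div_le_div_iff₀ (by positivity) (by norm_num : (0:ℝ) < 2)]
    nlinarith
  calc |t * r.eval (t ^ 2) - f t|
      ≤ |t * r.eval (t ^ 2) - t * k t| + |t * k t - f t| := abs_sub_le _ _ _
    _ ≤ ε / 2 + ε / 2 := add_le_add (h1.trans h2) (key t)
    _ = ε := by ring

set_option maxHeartbeats 2000000 in
/-- If a closed real-linear subspace `H` of a complex Hilbert space is globally invariant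
under the unitaries `exp(isA)` generated by a bounded selfadjoint operator `A`, then for
every continuous `g : ℝ → ℂ` with `g(-t) = conj (g t)`, the operator
`g(A) = (Re g)(A) + i (Im g)(A)` (continuous functional calculus) maps `H` into `H`. -/
theorem functional_calculus_preserves_real_subspace
    {ℋ : Type*} [NormedAddCommGroup ℋ] [InnerProductSpace ℂ ℋ] [CompleteSpace ℋ]
    (H : Submodule ℝ ℋ) (hH : IsClosed (H : Set ℋ))
    (A : ℋ →L[ℂ] ℋ) (hA : IsSelfAdjoint A)
    (hinv : ∀ s : ℝ,
      (⇑(NormedSpace.exp (((s : ℂ) * Complex.I) • A)) : ℋ → ℋ) '' (H : Set ℋ) = H)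
    (g : ℝ → ℂ) (hg : Continuous g) (hsym : ∀ t : ℝ, g (-t) = starRingEnd ℂ (g t)) :
    ∀ x ∈ H,
      (cfc (fun t : ℝ => (g t).re) A + Complex.I • cfc (fun t : ℝ => (g t).im) A) x ∈ H := by
  set B : ℋ →L[ℂ] ℋ := Complex.I • A with hBdef
  -- exp (s • B) preserves H
  have hexp_eq : ∀ s : ℝ, exp (s • B) = exp (((s : ℂ) * Complex.I) • A) := by
    intro s
    congr 1
    rw [hBdef, mul_smul, ← Complex.coe_smul]
  have hexpmem : ∀ s : ℝ, ∀ y ∈ H, exp (s • B) y ∈ H := by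
    intro s y hy
    rw [hexp_eq s]
    have : exp (((s : ℂ) * Complex.I) • A) y ∈
        (⇑(exp (((s : ℂ) * Complex.I) • A)) : ℋ → ℋ) '' (H : Set ℋ) :=
      Set.mem_image_of_mem _ hy
    rwa [hinv s] at this
  -- B maps H to H
  have hB : ∀ y ∈ H, B y ∈ H := by
    intro y hy
    have hd : HasDerivAt (fun s : ℝ => exp (s • B) y) (B y) 0 := by
      have h := hasDerivAt_exp_smul_const (𝕂 := ℝ) B 0
      have h2 : exp ((0 : ℝ) • B) * B = B := by simp
      rw [h2] at h
      have := ((ContinuousLinearMap.apply ℂ ℋ y).restrictScalars ℝ).hasFDerivAt.comp_hasDerivAt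
        (0 : ℝ) h
      exact this
    have htend := hasDerivAt_iff_tendsto_slope.mp hd
    refine hH.mem_of_tendsto htend (Filter.Eventually.of_forall fun s => ?_)
    rw [slope_def_module]
    have h0 : exp ((0 : ℝ) • B) y = y := by simp
    rw [h0]
    exact H.smul_mem _ (H.sub_mem (hexpmem s y hy) hy)
  -- A ∘ A maps H to H
  have hBB : ∀ y, B (B y) = - (A (A y)) := by
    intro y
    simp [hBdef, smul_smul, Complex.I_mul_I, neg_one_smul]
  have hA2 : ∀ y ∈ H, A (A y) ∈ H := by
    intro y hy
    have : - (A (A y)) ∈ H := by rw [← hBB]; exact hB _ (hB y hy)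
    simpa using H.neg_mem this
  -- powers of A * A preserve H
  have hpow : ∀ n : ℕ, ∀ y ∈ H, ((A * A) ^ n) y ∈ H := by
    intro n
    induction n with
    | zero => intro y hy; simpa using hy
    | succ n ih =>
      intro y hy
      rw [pow_succ, ContinuousLinearMap.mul_apply, ContinuousLinearMap.mul_apply]
      exact ih _ (hA2 y hy)
  -- real polynomials in A * A preserve H
  have haeval : ∀ r : ℝ[X], ∀ y ∈ H, (aeval (A * A) r : ℋ →L[ℂ] ℋ) y ∈ H := by
    intro r
    induction r using Polynomial.induction_on' with
    | add p q hp hq =>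
      intro y hy
      rw [map_add, ContinuousLinearMap.add_apply]
      exact H.add_mem (hp y hy) (hq y hy)
    | monomial n c =>
      intro y hy
      rw [aeval_monomial, ContinuousLinearMap.mul_apply]
      have : (algebraMap ℝ (ℋ →L[ℂ] ℋ) c) (((A * A) ^ n) y) = c • (((A * A) ^ n) y) := by
        simp [Algebra.algebraMap_eq_smul_one]
      rw [this]
      exact H.smul_mem c (hpow n y hy)
  -- spectrum bound
  set M : ℝ := ‖A‖ * ‖(1 : ℋ →L[ℂ] ℋ)‖ with hMdef
  have hM0 : 0 ≤ M := by positivity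
  have hspec : ∀ t : ℝ, t ∈ spectrum ℝ A → |t| ≤ M := by
    intro t ht
    have := spectrum.norm_le_norm_mul_of_mem ht
    rwa [Real.norm_eq_abs] at this
  -- cfc of polynomials in t ^ 2
  have hf2 : Continuous fun t : ℝ => t ^ 2 := by fun_prop
  have hpoly : ∀ r : ℝ[X], cfc (fun t : ℝ => r.eval (t ^ 2)) A = aeval (A * A) r := by
    intro r
    rw [cfc_map_polynomial r (fun t : ℝ => t ^ 2) A hA hf2.continuousOn,
      cfc_pow_id (R := ℝ) A 2 hA, sq]
  have hmul : ∀ r : ℝ[X], cfc (fun t : ℝ => t * r.eval (t ^ 2)) A = A * aeval (A * A) r := by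
    intro r
    rw [cfc_mul (fun t : ℝ => t) (fun t : ℝ => r.eval (t ^ 2)) A continuous_id.continuousOn
      (by fun_prop), cfc_id' ℝ A hA, hpoly r]
  -- the real and imaginary parts of g
  have hgre : Continuous fun t : ℝ => (g t).re := Complex.continuous_re.comp hg
  have hgim : Continuous fun t : ℝ => (g t).im := Complex.continuous_im.comp hg
  have hre_even : ∀ t : ℝ, (g (-t)).re = (g t).re := by
    intro t; rw [hsym t]; exact Complex.conj_re (g t)
  have him_odd : ∀ t : ℝ, (g (-t)).im = - (g t).im := by
    intro t; rw [hsym t]; exact Complex.conj_im (g t)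
  -- approximation bounds
  have hbound_re : ∀ ε : ℝ, 0 < ε → ∃ r : ℝ[X],
      ‖cfc (fun t : ℝ => (g t).re) A - aeval (A * A) r‖ ≤ ε := by
    intro ε hε
    obtain ⟨r, hr⟩ := aux_even_approx (fun t => (g t).re) hgre hre_even M ε hε
    refine ⟨r, ?_⟩
    rw [← hpoly r, ← cfc_sub (fun t : ℝ => (g t).re) (fun t : ℝ => r.eval (t ^ 2)) A
      hgre.continuousOn (by fun_prop)]
    refine norm_cfc_le hε.le fun t ht => ?_
    rw [Real.norm_eq_abs, abs_sub_comm]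
    exact hr t (hspec t ht)
  have hbound_im : ∀ ε : ℝ, 0 < ε → ∃ r : ℝ[X],
      ‖cfc (fun t : ℝ => (g t).im) A - A * aeval (A * A) r‖ ≤ ε := by
    intro ε hε
    obtain ⟨r, hr⟩ := aux_odd_approx (fun t => (g t).im) hgim him_odd M ε hM0 hε
    refine ⟨r, ?_⟩
    rw [← hmul r, ← cfc_sub (fun t : ℝ => (g t).im) (fun t : ℝ => t * r.eval (t ^ 2)) A
      hgim.continuousOn (by fun_prop)]
    refine norm_cfc_le hε.le fun t ht => ?_
    rw [Real.norm_eq_abs, abs_sub_comm]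
    exact hr t (hspec t ht)
  -- assemble
  intro x hx
  have : ((cfc (fun t : ℝ => (g t).re) A + Complex.I • cfc (fun t : ℝ => (g t).im) A) x)
      ∈ closure (H : Set ℋ) := by
    rw [Metric.mem_closure_iff]
    intro ε hε
    have hε1 : (0:ℝ) < ε / (2 * (‖x‖ + 1)) := by positivity
    obtain ⟨r, hr⟩ := hbound_re _ hε1
    obtain ⟨s, hs⟩ := hbound_im _ hε1
    set P : ℋ →L[ℂ] ℋ := aeval (A * A) r with hPdef
    set Q : ℋ →L[ℂ] ℋ := aeval (A * A) s with hQdef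
    refine ⟨P x + B (Q x), H.add_mem (haeval r x hx) (hB _ (haeval s x hx)), ?_⟩
    have hIB : B (Q x) = Complex.I • ((A * Q) x) := by
      simp [hBdef, ContinuousLinearMap.mul_apply]
    rw [dist_eq_norm]
    have heq : (cfc (fun t : ℝ => (g t).re) A + Complex.I • cfc (fun t : ℝ => (g t).im) A) x
        - (P x + B (Q x))
        = (cfc (fun t : ℝ => (g t).re) A - P) x
          + Complex.I • ((cfc (fun t : ℝ => (g t).im) A - A * Q) x) := by
      rw [hIB]
      simp only [ContinuousLinearMap.add_apply, ContinuousLinearMap.sub_apply,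
        ContinuousLinearMap.smul_apply, smul_sub]
      abel
    rw [heq]
    have h1 : ‖(cfc (fun t : ℝ => (g t).re) A - P) x‖ ≤ (ε / (2 * (‖x‖ + 1))) * ‖x‖ :=
      le_trans ((cfc (fun t : ℝ => (g t).re) A - P).le_opNorm x)
        (mul_le_mul_of_nonneg_right hr (norm_nonneg x))
    have h2 : ‖Complex.I • ((cfc (fun t : ℝ => (g t).im) A - A * Q) x)‖
        ≤ (ε / (2 * (‖x‖ + 1))) * ‖x‖ := by
      rw [norm_smul, Complex.norm_I, one_mul]
      exact le_trans ((cfc (fun t : ℝ => (g t).im) A - A * Q).le_opNorm x)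
        (mul_le_mul_of_nonneg_right hs (norm_nonneg x))
    calc ‖(cfc (fun t : ℝ => (g t).re) A - P) x
          + Complex.I • ((cfc (fun t : ℝ => (g t).im) A - A * Q) x)‖
        ≤ (ε / (2 * (‖x‖ + 1))) * ‖x‖ + (ε / (2 * (‖x‖ + 1))) * ‖x‖ :=
          le_trans (norm_add_le _ _) (add_le_add h1 h2)
      _ = ε * (‖x‖ / (‖x‖ + 1)) := by field_simp; ring
      _ < ε * 1 := by
          apply mul_lt_mul_of_pos_left _ hε
          rw [div_lt_one (by positivity)]
          linarith
      _ = ε := mul_one ε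
  rw [hH.closure_eq] at this
  exact this
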